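/- Let C ⊆ {0,1}^n be a union of a d-complete collection of d-cubes. For any (d−1)-element set S of coordinate directions, the iterated reduction graph C^S is a forest (contains no cycles). -/

import Mathlib

open Finset

/-- A concept class `C` shatters a coordinate set `I` if every assignment of
values to the coordinates in `I` is realized by some concept in `C`. -/
def Shatters {α : Type*} (C : Finset (α → Bool)) (I : Finset α) : Prop :=
  ∀ f : α → Bool, ∃ c ∈ C, ∀ i ∈ I, c i = f i

/-- The VC dimension of a concept class: the largest cardinality of a shattered
coordinate set. -/
noncomputable def vcDim {α : Type*} [Fintype α] [DecidableEq α]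
    (C : Finset (α → Bool)) : ℕ :=
  letI := Classical.decPred (Shatters C)
  (Finset.univ.filter (Shatters C)).sup Finset.card

/-- The subcube with free coordinate set `S` and anchor `a`: all vectors that
agree with `a` outside `S`.  Its dimension is `S.card`. -/
def subcube {α : Type*} [Fintype α] [DecidableEq α] (S : Finset α) (a : α → Bool) :
    Finset (α → Bool) :=
  Finset.univ.filter fun c => ∀ i ∉ S, c i = a i

/-- The iterated reduction of a `d`-complete collection along a `(d-1)`-set `S`
of directions: the graph on the projected cube `{0,1}^{[n]\S}` whose edges are
the projections of the `d`-cubes of the collection whose direction set contains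
`S`.  `f T` is the anchor of the cube of the collection with direction set `T`. -/
noncomputable def iteratedReduction (n : ℕ) (f : Finset (Fin n) → (Fin n → Bool))
    (S : Finset (Fin n)) : SimpleGraph ({i : Fin n // i ∉ S} → Bool) :=
  SimpleGraph.fromRel (fun u v =>
    ∃ x, x ∉ S ∧
      (∃ c ∈ subcube (insert x S) (f (insert x S)),
        ∀ i : {i : Fin n // i ∉ S}, c i.1 = u i) ∧
      (∃ c ∈ subcube (insert x S) (f (insert x S)),
        ∀ i : {i : Fin n // i ∉ S}, c i.1 = v i))

private lemma bool_aux : ∀ p q r s : Bool, p ≠ q → r ≠ s →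
    (p = r ∧ q = s) ∨ (p = s ∧ q = r) := by decide

lemma adj_structure {n : ℕ} {f : Finset (Fin n) → (Fin n → Bool)} {S : Finset (Fin n)}
    {u v : {i : Fin n // i ∉ S} → Bool} (h : (iteratedReduction n f S).Adj u v) :
    ∃ x : {i : Fin n // i ∉ S}, u x ≠ v x ∧
      ∀ i, i ≠ x → u i = v i ∧ u i = f (insert x.1 S) i.1 := by
  obtain ⟨hne, h⟩ := h
  have h' : ∃ x, x ∉ S ∧
      (∃ c ∈ subcube (insert x S) (f (insert x S)),
        ∀ i : {i : Fin n // i ∉ S}, c i.1 = u i) ∧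
      (∃ c ∈ subcube (insert x S) (f (insert x S)),
        ∀ i : {i : Fin n // i ∉ S}, c i.1 = v i) := by
    rcases h with h | h
    · exact h
    · obtain ⟨x, hx, h1, h2⟩ := h; exact ⟨x, hx, h2, h1⟩
  obtain ⟨x, hx, ⟨c, hc, hcu⟩, ⟨c', hc', hcv⟩⟩ := h'
  simp only [subcube, Finset.mem_filter, Finset.mem_univ, true_and] at hc hc'
  refine ⟨⟨x, hx⟩, ?_, ?_⟩
  · intro heq
    apply hne
    funext i
    by_cases hi : i = ⟨x, hx⟩
    · subst hi; exact heq
    · have hix : i.1 ∉ insert x S := by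
        simp only [Finset.mem_insert, not_or]
        exact ⟨fun h => hi (Subtype.ext h), i.2⟩
      rw [← hcu i, ← hcv i, hc i.1 hix, hc' i.1 hix]
  · intro i hi
    have hix : i.1 ∉ insert x S := by
      simp only [Finset.mem_insert, not_or]
      exact ⟨fun h => hi (Subtype.ext h), i.2⟩
    constructor
    · rw [← hcu i, ← hcv i, hc i.1 hix, hc' i.1 hix]
    · rw [← hcu i, hc i.1 hix]

theorem iteratedReduction_isAcyclic (n d : ℕ) (hd : 1 ≤ d)
    (f : Finset (Fin n) → (Fin n → Bool))
    (S : Finset (Fin n)) (hS : S.card = d - 1) :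
    (iteratedReduction n f S).IsAcyclic := by
  rw [SimpleGraph.isAcyclic_iff_forall_adj_isBridge]
  intro u v huv
  rw [SimpleGraph.isBridge_iff]
  refine ?_
  obtain ⟨x, hx, hagree⟩ := adj_structure huv
  set G' := iteratedReduction n f S \ SimpleGraph.fromEdgeSet {s(u, v)} with hG'
  have key : ∀ a b, G'.Adj a b → a x = b x := by
    intro a b hab
    by_contra hne
    have hG : (iteratedReduction n f S).Adj a b := hab.1
    have hnot : ¬ (SimpleGraph.fromEdgeSet {s(u, v)}).Adj a b := hab.2
    obtain ⟨y, hy, hagree'⟩ := adj_structure hG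
    have hyx : y = x := by
      by_contra hyx
      exact hne ((hagree' x (fun h => hyx h.symm)).1)
    rw [hyx] at hy hagree'
    have hoff : ∀ i, i ≠ x → a i = u i ∧ b i = u i := by
      intro i hi
      have h1 := (hagree i hi).2
      have h2 := (hagree' i hi).2
      have h4 := (hagree' i hi).1
      exact ⟨h2.trans h1.symm, (h4.symm.trans h2).trans h1.symm⟩
    apply hnot
    rw [SimpleGraph.fromEdgeSet_adj]
    refine ⟨?_, hG.ne⟩
    rw [Set.mem_singleton_iff]
    rcases bool_aux (a x) (b x) (u x) (v x) hy hx with ⟨h1, h2⟩ | ⟨h1, h2⟩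
    · have ha : a = u := by
        funext i
        by_cases hi : i = x
        · subst hi; exact h1
        · exact (hoff i hi).1
      have hb : b = v := by
        funext i
        by_cases hi : i = x
        · subst hi; exact h2
        · exact (hoff i hi).2.trans (hagree i hi).1
      rw [ha, hb]
    · have ha : a = v := by
        funext i
        by_cases hi : i = x
        · subst hi; exact h1
        · exact (hoff i hi).1.trans (hagree i hi).1
      have hb : b = u := by
        funext i
        by_cases hi : i = x
        · subst hi; exact h2
        · exact (hoff i hi).2
      rw [ha, hb, Sym2.eq_swap]
  rintro ⟨p⟩
  have walkeq : ∀ {a b} (q : G'.Walk a b), a x = b x := by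
    intro a b q
    induction q with
    | nil => rfl
    | cons h q ih => exact (key _ _ h).trans ih
  exact hx (walkeq p)
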